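/- For every m > 3 there exists a constant 𝒞 ≥ 0 such that for all t, ξ ∈ ℝ² with W² := 1 + |t|² ≥ m, one has 2(W² + 3) ⟨t, ξ⟩² / ((W² − 1)(W² − 3) W²) ≤ 𝒞 · ( |ξ|² − ⟨t, ξ⟩² / W² ). Equivalently, the quadratic form Σ a_{εη} ξ_ε ξ_η with a_{εη} = δ_{εη} − t_ε t_η/W² + (2(W²+3)/((W²−1)(W²−3))) t_ε t_η/W² satisfies Σ h_{εη} ξ_ε ξ_η ≤ Σ a_{εη} ξ_ε ξ_η ≤ (1 + 𝒞) Σ h_{εη} ξ_ε ξ_η, where h_{εη} = δ_{εη} − t_ε t_η/W². -/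

import Mathlib

open scoped RealInnerProductSpace

/-- Bound (5.11): for each `m > 3` there is a constant `𝒞 ≥ 0` such that whenever
`W² = 1 + |t|² ≥ m`, the extra term of the Kropina coefficients is controlled by the
mean-curvature-type form; equivalently `Σ h ξξ ≤ Σ a ξξ ≤ (1+𝒞) Σ h ξξ`. -/
lemma key (m W2 s Q : ℝ) (hm : 3 < m) (hW : m ≤ W2) (hQ : 0 ≤ Q) (hs : s^2 ≤ (W2-1)*Q) :
    2*(W2+3)*s^2/((W2-1)*(W2-3)*W2) ≤ (2*(m+3)/(m-3))*(Q - s^2/W2) := by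
  have h1 : (0:ℝ) < W2 - 1 := by linarith
  have h2 : (0:ℝ) < W2 - 3 := by linarith
  have h3 : (0:ℝ) < W2 := by linarith
  have h4 : (0:ℝ) < m - 3 := by linarith
  have ha : 0 ≤ (W2-1)*Q - s^2 := by linarith
  have hp1 : (0:ℝ) ≤ (m+3)*(W2-1)*(W2-3) :=
    mul_nonneg (mul_nonneg (by linarith) h1.le) h2.le
  have hp2 : (0:ℝ) ≤ (W2+3)*(m-3) := mul_nonneg (by linarith) h4.le
  have hrhs : (2*(m+3)/(m-3))*(Q - s^2/W2) = 2*(m+3)*(Q*W2-s^2) / ((m-3)*W2) := by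
    field_simp
  rw [hrhs, div_le_div_iff₀ (by positivity) (by positivity)]
  nlinarith [mul_nonneg (mul_nonneg h1.le hQ) (sub_nonneg.2 hW),
    mul_nonneg ha hp1, mul_nonneg ha hp2,
    mul_nonneg (mul_nonneg (mul_nonneg h1.le hQ) (sub_nonneg.2 hW)) h3.le,
    mul_nonneg (mul_nonneg ha hp1) h3.le,
    mul_nonneg (mul_nonneg ha hp2) h3.le]


theorem stmt_7 (m : ℝ) (hm : 3 < m) :
    ∃ C : ℝ, 0 ≤ C ∧ ∀ t ξ : EuclideanSpace ℝ (Fin 2), m ≤ 1 + ‖t‖ ^ 2 →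
      (2 * ((1 + ‖t‖ ^ 2) + 3) * ⟪t, ξ⟫ ^ 2 /
          (((1 + ‖t‖ ^ 2) - 1) * ((1 + ‖t‖ ^ 2) - 3) * (1 + ‖t‖ ^ 2)) ≤
        C * (‖ξ‖ ^ 2 - ⟪t, ξ⟫ ^ 2 / (1 + ‖t‖ ^ 2))) ∧
      ((∑ ε : Fin 2, ∑ η : Fin 2,
          ((if ε = η then (1 : ℝ) else 0) - t ε * t η / (1 + ‖t‖ ^ 2)) * ξ ε * ξ η) ≤
        (∑ ε : Fin 2, ∑ η : Fin 2,
          ((if ε = η then (1 : ℝ) else 0) - t ε * t η / (1 + ‖t‖ ^ 2) +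
            (2 * ((1 + ‖t‖ ^ 2) + 3) / (((1 + ‖t‖ ^ 2) - 1) * ((1 + ‖t‖ ^ 2) - 3))) *
              (t ε * t η / (1 + ‖t‖ ^ 2))) * ξ ε * ξ η) ∧
        (∑ ε : Fin 2, ∑ η : Fin 2,
          ((if ε = η then (1 : ℝ) else 0) - t ε * t η / (1 + ‖t‖ ^ 2) +
            (2 * ((1 + ‖t‖ ^ 2) + 3) / (((1 + ‖t‖ ^ 2) - 1) * ((1 + ‖t‖ ^ 2) - 3))) *
              (t ε * t η / (1 + ‖t‖ ^ 2))) * ξ ε * ξ η) ≤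
        (1 + C) * (∑ ε : Fin 2, ∑ η : Fin 2,
          ((if ε = η then (1 : ℝ) else 0) - t ε * t η / (1 + ‖t‖ ^ 2)) * ξ ε * ξ η)) := by
  refine ⟨2*(m+3)/(m-3), div_nonneg (by linarith) (by linarith), fun t ξ hW => ?_⟩
  set W2 : ℝ := 1 + ‖t‖ ^ 2 with hW2
  set s : ℝ := ⟪t, ξ⟫ with hsdef
  set Q : ℝ := ‖ξ‖ ^ 2 with hQdef
  have h1 : (0:ℝ) < W2 - 1 := by nlinarith
  have h2 : (0:ℝ) < W2 - 3 := by nlinarith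
  have h3 : (0:ℝ) < W2 := by nlinarith
  have h4 : (0:ℝ) < m - 3 := by linarith
  have hQ : 0 ≤ Q := by positivity
  have hs : s ^ 2 ≤ (W2 - 1) * Q := by
    have h := abs_real_inner_le_norm t ξ
    have h' : s ^ 2 ≤ (‖t‖ * ‖ξ‖) ^ 2 := by
      rw [← sq_abs s]; exact pow_le_pow_left₀ (abs_nonneg _) h 2
    have : W2 - 1 = ‖t‖ ^ 2 := by rw [hW2]; ring
    rw [this, hQdef]; nlinarith [h']
  have hkey := key m W2 s Q hm hW hQ hs
  have hcoord_s : s = t 0 * ξ 0 + t 1 * ξ 1 := by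
    simp [hsdef, PiLp.inner_apply, RCLike.inner_apply, Fin.sum_univ_two]; ring
  have hcoord_Q : Q = ξ 0 ^ 2 + ξ 1 ^ 2 := by
    rw [hQdef, ← real_inner_self_eq_norm_sq]
    simp only [PiLp.inner_apply, RCLike.inner_apply, Fin.sum_univ_two, conj_trivial]; ring
  have hsumh : (∑ ε : Fin 2, ∑ η : Fin 2,
      ((if ε = η then (1 : ℝ) else 0) - t ε * t η / W2) * ξ ε * ξ η) = Q - s ^ 2 / W2 := by
    simp only [Fin.sum_univ_two]
    simp only [show (0 : Fin 2) ≠ 1 by decide, show (1 : Fin 2) ≠ 0 by decide, if_true, if_false, ite_true, ite_false, eq_self_iff_true]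
    rw [hcoord_s, hcoord_Q]
    field_simp
    ring
  have hsuma : (∑ ε : Fin 2, ∑ η : Fin 2,
      ((if ε = η then (1 : ℝ) else 0) - t ε * t η / W2 +
        (2 * (W2 + 3) / ((W2 - 1) * (W2 - 3))) * (t ε * t η / W2)) * ξ ε * ξ η)
      = (Q - s ^ 2 / W2) + 2 * (W2 + 3) * s ^ 2 / ((W2 - 1) * (W2 - 3) * W2) := by
    simp only [Fin.sum_univ_two]
    simp only [show (0 : Fin 2) ≠ 1 by decide, show (1 : Fin 2) ≠ 0 by decide, if_true, if_false, ite_true, ite_false, eq_self_iff_true]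
    rw [hcoord_s, hcoord_Q]
    field_simp
    ring
  have hextra : 0 ≤ 2 * (W2 + 3) * s ^ 2 / ((W2 - 1) * (W2 - 3) * W2) := by positivity
  have hhnn : 0 ≤ Q - s ^ 2 / W2 := by
    rw [sub_nonneg, div_le_iff₀ h3]
    nlinarith
  refine ⟨hkey, ?_, ?_⟩
  · rw [hsumh, hsuma]; linarith
  · rw [hsumh, hsuma, add_mul, one_mul]; linarith [hkey]
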